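/- (Compactness of the set of η-weighted occupancy measures.) In the finite MDP setting with weights η : ℕ → ℝ, η(k) ≥ 0, ∑_k η(k) = 1, the set 𝒟 = { (s₀,s,a) ↦ μ_π((s,a)|s₀) : π a stationary policy } is a compact subset of the finite-dimensional space of real-valued functions on S × S × A. -/

import Mathlib

open scoped BigOperators Classical

/-- `n`-step state–action distribution of the stationary policy `π` started at a state. -/
noncomputable def PstepS {S A : Type*} [Fintype S] [Fintype A]
    (P : S × A → PMF S) (π : S → PMF A) : ℕ → S → S × A → ℝ
  | 0, s₀, x => if x.1 = s₀ then (π x.1 x.2).toReal else 0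
  | n + 1, s₀, x => ∑ y : S × A, PstepS P π n s₀ y * (P y x.1).toReal * (π x.1 x.2).toReal

/-- `n`-step state–action distribution of `π` started at a state–action pair. -/
noncomputable def PstepSA {S A : Type*} [Fintype S] [Fintype A]
    (P : S × A → PMF S) (π : S → PMF A) : ℕ → S × A → S × A → ℝ
  | 0, y, x => if x = y then 1 else 0
  | n + 1, y, x => ∑ z : S × A, PstepSA P π n y z * (P z x.1).toReal * (π x.1 x.2).toReal

/-- η-weighted future state distribution, started at a state. -/
noncomputable def PetaS {S A : Type*} [Fintype S] [Fintype A]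
    (P : S × A → PMF S) (π : S → PMF A) (η : ℕ → ℝ) (s₀ : S) (x : S × A) : ℝ :=
  ∑' k, η k * PstepS P π k s₀ x

/-- η-weighted future state distribution, started at a state–action pair. -/
noncomputable def PetaSA {S A : Type*} [Fintype S] [Fintype A]
    (P : S × A → PMF S) (π : S → PMF A) (η : ℕ → ℝ) (y : S × A) (x : S × A) : ℝ :=
  ∑' k, η k * PstepSA P π k y x

/-- γ-discounted occupancy measure, started at a state. -/
noncomputable def rhoS {S A : Type*} [Fintype S] [Fintype A]
    (P : S × A → PMF S) (π : S → PMF A) (γ : ℝ) (s₀ : S) (x : S × A) : ℝ :=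
  ∑' t, γ ^ t * PstepS P π t s₀ x

/-- γ-discounted occupancy measure, started at a state–action pair. -/
noncomputable def rhoSA {S A : Type*} [Fintype S] [Fintype A]
    (P : S × A → PMF S) (π : S → PMF A) (γ : ℝ) (y : S × A) (x : S × A) : ℝ :=
  ∑' t, γ ^ t * PstepSA P π t y x

/-- η-weighted, γ-discounted future occupancy measure `μ_π`. -/
noncomputable def muS {S A : Type*} [Fintype S] [Fintype A]
    (P : S × A → PMF S) (π : S → PMF A) (γ : ℝ) (η : ℕ → ℝ) (s₀ : S) (x : S × A) : ℝ :=
  ∑' t, ∑' k, γ ^ t * η k * PstepS P π (t + k) s₀ x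


section Aux

variable {S A : Type*} [Fintype S] [Fintype A]

noncomputable def Qstep (P : S × A → PMF S) (f : S → A → ℝ) : ℕ → S → S × A → ℝ
  | 0, s₀, x => if x.1 = s₀ then f x.1 x.2 else 0
  | n + 1, s₀, x => ∑ y : S × A, Qstep P f n s₀ y * (P y x.1).toReal * f x.1 x.2

lemma pmf_sum_toReal {B : Type*} [Fintype B] (p : PMF B) : ∑ b, (p b).toReal = 1 := by
  rw [← ENNReal.toReal_sum (fun b _ => p.apply_ne_top b), ← tsum_fintype (L := .unconditional _), p.tsum_coe,
    ENNReal.toReal_one]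

lemma Qstep_eq (P : S × A → PMF S) (π : S → PMF A) (n : ℕ) (s₀ : S) (x : S × A) :
    PstepS P π n s₀ x = Qstep P (fun s a => (π s a).toReal) n s₀ x := by
  induction n generalizing x with
  | zero => simp [PstepS, Qstep]
  | succ n ih => simp [PstepS, Qstep, ih]

lemma Qstep_nonneg (P : S × A → PMF S) {f : S → A → ℝ} (hf : ∀ s a, 0 ≤ f s a)
    (n : ℕ) (s₀ : S) (x : S × A) : 0 ≤ Qstep P f n s₀ x := by
  induction n generalizing x with
  | zero => simp only [Qstep]; split <;> simp [hf]
  | succ n ih =>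
    refine Finset.sum_nonneg fun y _ => ?_
    exact mul_nonneg (mul_nonneg (ih y) ENNReal.toReal_nonneg) (hf _ _)

lemma Qstep_sum (P : S × A → PMF S) {f : S → A → ℝ} (hf1 : ∀ s, ∑ a, f s a = 1)
    (n : ℕ) (s₀ : S) : ∑ x : S × A, Qstep P f n s₀ x = 1 := by
  induction n with
  | zero =>
    simp only [Qstep]
    rw [Fintype.sum_prod_type]
    simp [Finset.sum_ite_eq', hf1]
  | succ n ih =>
    simp only [Qstep]
    rw [Finset.sum_comm]
    have : ∀ y : S × A, ∑ x : S × A, Qstep P f n s₀ y * (P y x.1).toReal * f x.1 x.2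
        = Qstep P f n s₀ y := by
      intro y
      rw [Fintype.sum_prod_type]
      have : ∀ s : S, ∑ a : A, Qstep P f n s₀ y * (P y s).toReal * f s a
          = Qstep P f n s₀ y * (P y s).toReal := by
        intro s
        rw [← Finset.mul_sum, hf1, mul_one]
      simp only [this]
      rw [← Finset.mul_sum, pmf_sum_toReal, mul_one]
    simp only [this, ih]

lemma Qstep_le_one (P : S × A → PMF S) {f : S → A → ℝ} (hf : ∀ s a, 0 ≤ f s a)
    (hf1 : ∀ s, ∑ a, f s a = 1) (n : ℕ) (s₀ : S) (x : S × A) : Qstep P f n s₀ x ≤ 1 := by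
  calc Qstep P f n s₀ x ≤ ∑ y : S × A, Qstep P f n s₀ y :=
        Finset.single_le_sum (fun y _ => Qstep_nonneg P hf n s₀ y) (Finset.mem_univ x)
    _ = 1 := Qstep_sum P hf1 n s₀

lemma Qstep_continuous (P : S × A → PMF S) (n : ℕ) (s₀ : S) (x : S × A) :
    Continuous fun f : S → A → ℝ => Qstep P f n s₀ x := by
  induction n generalizing x with
  | zero =>
    simp only [Qstep]
    split
    · exact (continuous_apply x.2).comp (continuous_apply x.1)
    · exact continuous_const
  | succ n ih =>
    simp only [Qstep]
    refine continuous_finset_sum _ fun y _ => ?_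
    exact ((ih y).mul continuous_const).mul
      ((continuous_apply x.2).comp (continuous_apply x.1))

end Aux

section Main

variable {S A : Type*} [Fintype S] [Fintype A]

lemma summable_eta {η : ℕ → ℝ} (hη1 : ∑' k, η k = 1) : Summable η := by
  by_contra h
  rw [tsum_eq_zero_of_not_summable h] at hη1
  norm_num at hη1

lemma summable_u {γ : ℝ} (hγ : γ ∈ Set.Ioo (0 : ℝ) 1) {η : ℕ → ℝ}
    (hη0 : ∀ k, 0 ≤ η k) (hη1 : ∑' k, η k = 1) :
    Summable (fun q : ℕ × ℕ => γ ^ q.1 * η q.2) :=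
  (summable_geometric_of_lt_one hγ.1.le hγ.2).mul_of_nonneg (summable_eta hη1)
    (fun t => pow_nonneg hγ.1.le t) hη0

lemma muS_eq_pair (P : S × A → PMF S) (π : S → PMF A) {γ : ℝ}
    (hγ : γ ∈ Set.Ioo (0 : ℝ) 1) {η : ℕ → ℝ} (hη0 : ∀ k, 0 ≤ η k)
    (hη1 : ∑' k, η k = 1) {f : S → A → ℝ}
    (hπf : ∀ s a, (π s a).toReal = f s a)
    (hf : ∀ s a, 0 ≤ f s a) (hf1 : ∀ s, ∑ a, f s a = 1) (s₀ : S) (x : S × A) :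
    muS P π γ η s₀ x = ∑' q : ℕ × ℕ, γ ^ q.1 * η q.2 * Qstep P f (q.1 + q.2) s₀ x := by
  have hfe : (fun s a => (π s a).toReal) = f := by funext s a; exact hπf s a
  have hterm : ∀ t k, γ ^ t * η k * PstepS P π (t + k) s₀ x
      = γ ^ t * η k * Qstep P f (t + k) s₀ x := by
    intro t k; rw [Qstep_eq, hfe]
  have hsum : Summable (fun q : ℕ × ℕ => γ ^ q.1 * η q.2 * Qstep P f (q.1 + q.2) s₀ x) := by
    refine (summable_u hγ hη0 hη1).of_nonneg_of_le (fun q => ?_) (fun q => ?_)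
    · exact mul_nonneg (mul_nonneg (pow_nonneg hγ.1.le _) (hη0 _))
        (Qstep_nonneg P hf _ _ _)
    · calc γ ^ q.1 * η q.2 * Qstep P f (q.1 + q.2) s₀ x
          ≤ γ ^ q.1 * η q.2 * 1 := by
            refine mul_le_mul_of_nonneg_left (Qstep_le_one P hf hf1 _ _ _) ?_
            exact mul_nonneg (pow_nonneg hγ.1.le _) (hη0 _)
        _ = γ ^ q.1 * η q.2 := mul_one _
  rw [muS]
  simp only [hterm]
  exact (Summable.tsum_prod' hsum hsum.prod_factor).symm

end Main

theorem stmt9 {S A : Type*} [Fintype S] [Fintype A] [Nonempty S] [Nonempty A]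
    (P : S × A → PMF S) (γ : ℝ) (hγ : γ ∈ Set.Ioo (0 : ℝ) 1)
    (η : ℕ → ℝ) (hη0 : ∀ k, 0 ≤ η k) (hη1 : ∑' k, η k = 1) :
    IsCompact { F : S × S × A → ℝ |
      ∃ π : S → PMF A, F = fun p => muS P π γ η p.1 (p.2.1, p.2.2) } := by
  classical
  set K : Set (S → A → ℝ) := {f | (∀ s a, 0 ≤ f s a) ∧ ∀ s, ∑ a, f s a = 1} with hK
  have hKclosed : IsClosed K := by
    have hKeq : K = (⋂ s, ⋂ a, {f : S → A → ℝ | 0 ≤ f s a}) ∩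
        ⋂ s, {f : S → A → ℝ | ∑ a, f s a = 1} := by
      ext f
      simp [hK, Set.mem_iInter]
    rw [hKeq]
    refine IsClosed.inter ?_ ?_
    · exact isClosed_iInter fun s => isClosed_iInter fun a =>
        isClosed_le continuous_const ((continuous_apply a).comp (continuous_apply s))
    · exact isClosed_iInter fun s => isClosed_eq
        (continuous_finset_sum _ fun a _ => (continuous_apply a).comp (continuous_apply s))
        continuous_const
  have hKsub : K ⊆ Metric.closedBall 0 1 := by
    intro f hf
    rw [Metric.mem_closedBall, dist_pi_le_iff zero_le_one]
    intro s
    rw [dist_pi_le_iff zero_le_one]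
    intro a
    simp only [Pi.zero_apply, Real.dist_eq, sub_zero]
    rw [abs_of_nonneg (hf.1 s a)]
    calc f s a ≤ ∑ b, f s b :=
          Finset.single_le_sum (fun b _ => hf.1 s b) (Finset.mem_univ a)
      _ = 1 := hf.2 s
  have hKcomp : IsCompact K :=
    (isCompact_closedBall (0 : S → A → ℝ) 1).of_isClosed_subset hKclosed hKsub
  set G : (S → A → ℝ) → (S × S × A → ℝ) := fun f p =>
    ∑' q : ℕ × ℕ, γ ^ q.1 * η q.2 * Qstep P f (q.1 + q.2) p.1 p.2 with hG
  have hGcont : ContinuousOn G K := by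
    rw [continuousOn_iff_continuous_restrict]
    refine continuous_pi fun p => ?_
    refine continuous_tsum (f := fun (q : ℕ × ℕ) (f : K) =>
        γ ^ q.1 * η q.2 * Qstep P (f : S → A → ℝ) (q.1 + q.2) p.1 p.2)
      (fun q => continuous_const.mul
        ((Qstep_continuous P (q.1 + q.2) p.1 p.2).comp continuous_subtype_val))
      (summable_u hγ hη0 hη1) (fun q f => ?_)
    have h0 : 0 ≤ Qstep P (f : S → A → ℝ) (q.1 + q.2) p.1 p.2 :=
      Qstep_nonneg P f.2.1 _ _ _
    have h1 : Qstep P (f : S → A → ℝ) (q.1 + q.2) p.1 p.2 ≤ 1 :=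
      Qstep_le_one P f.2.1 f.2.2 _ _ _
    have hc : 0 ≤ γ ^ q.1 * η q.2 := mul_nonneg (pow_nonneg hγ.1.le _) (hη0 _)
    rw [Real.norm_eq_abs, abs_mul, abs_of_nonneg hc, abs_of_nonneg h0]
    calc γ ^ q.1 * η q.2 * Qstep P (f : S → A → ℝ) (q.1 + q.2) p.1 p.2
        ≤ γ ^ q.1 * η q.2 * 1 := mul_le_mul_of_nonneg_left h1 hc
      _ = γ ^ q.1 * η q.2 := mul_one _
  have hset : { F : S × S × A → ℝ |
      ∃ π : S → PMF A, F = fun p => muS P π γ η p.1 (p.2.1, p.2.2) } = G '' K := by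
    ext F
    constructor
    · rintro ⟨π, rfl⟩
      refine ⟨fun s a => (π s a).toReal,
        ⟨fun s a => ENNReal.toReal_nonneg, fun s => pmf_sum_toReal (π s)⟩, ?_⟩
      funext p
      exact (muS_eq_pair P π hγ hη0 hη1 (fun s a => rfl)
        (fun s a => ENNReal.toReal_nonneg) (fun s => pmf_sum_toReal (π s))
        p.1 (p.2.1, p.2.2)).symm
    · rintro ⟨f, hf, rfl⟩
      refine ⟨fun s => PMF.ofFintype (fun a => ENNReal.ofReal (f s a)) (by
        rw [← ENNReal.ofReal_sum_of_nonneg (fun a _ => hf.1 s a), hf.2 s,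
          ENNReal.ofReal_one]), ?_⟩
      funext p
      exact (muS_eq_pair P _ hγ hη0 hη1
        (fun s a => by
          rw [PMF.ofFintype_apply]; exact ENNReal.toReal_ofReal (hf.1 s a))
        hf.1 hf.2 p.1 (p.2.1, p.2.2)).symm
  rw [hset]
  exact hKcomp.image_of_continuousOn hGcont
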